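/- Let S be a finite strategy set with |S| ≥ 2, let M : S × S → ℝ be skew-symmetric (M(s,t) = −M(t,s) for all s,t), and suppose S is partitioned into k nonempty, pairwise disjoint layers L_1, …, L_k such that M(s_1, s_2) > 0 for all s_1 ∈ L_i, s_2 ∈ L_j whenever i < j (every strategy in an earlier layer beats every strategy in any later layer). Define the win-rate of a strategy s as TS(s) = (1/(|S|−1)) ∑_{z ∈ S} 1[M(s,z) > 0]. Then for all i < j, every s ∈ L_i and every t ∈ L_j satisfy TS(s) > TS(t). -/
import Mathlib


/-- The win-rate of strategy `s`: the fraction of strategies `z` in the whole strategy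
space that `s` beats (`M s z > 0`), normalized by `|S| - 1`. -/
noncomputable def winRate {S : Type*} [Fintype S] (M : S → S → ℝ) (s : S) : ℝ :=
  (1 / ((Fintype.card S : ℝ) - 1)) * ∑ z : S, (if 0 < M s z then (1 : ℝ) else 0)

/-- Let `S` be a finite strategy set with `|S| ≥ 2`, `M` skew-symmetric,
and `L 1, …, L k` a partition of `S` into nonempty pairwise-disjoint layers such that every
strategy in an earlier layer beats every strategy in any later layer. Then for `i < j`, every
`s ∈ L i` has strictly greater win-rate than every `t ∈ L j`. -/
theorem winRate_strict_anti_of_layers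
    {S : Type*} [Fintype S] (hcard : 2 ≤ Fintype.card S)
    (M : S → S → ℝ) (hskew : ∀ s t, M s t = -M t s)
    (k : ℕ) (L : Fin k → Finset S)
    (hne : ∀ i, (L i).Nonempty)
    (hdisj : ∀ i j, i ≠ j → Disjoint (L i) (L j))
    (hcover : ∀ s : S, ∃ i, s ∈ L i)
    (hbeat : ∀ i j : Fin k, i < j → ∀ s₁ ∈ L i, ∀ s₂ ∈ L j, 0 < M s₁ s₂) :
    ∀ i j : Fin k, i < j → ∀ s ∈ L i, ∀ t ∈ L j, winRate M t < winRate M s := by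
  intro i j hij s hs t ht
  have hpos : (0:ℝ) < (Fintype.card S : ℝ) - 1 := by
    have : (2:ℝ) ≤ (Fintype.card S : ℝ) := by exact_mod_cast hcard
    linarith
  have hdiag : M t t = 0 := by have := hskew t t; linarith
  have hsub : Finset.univ.filter (fun z => 0 < M t z) ⊆
      Finset.univ.filter (fun z => 0 < M s z) := by
    intro z hz
    simp only [Finset.mem_filter, Finset.mem_univ, true_and] at hz ⊢
    obtain ⟨l, hl⟩ := hcover z
    rcases lt_trichotomy l j with h | h | h
    · exfalso; have h1 := hbeat l j h z hl t ht; have h2 := hskew t z; linarith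
    · subst h; exact hbeat i l hij s hs z hl
    · exact hbeat i l (hij.trans h) s hs z hl
  have hts : t ∈ Finset.univ.filter (fun z => 0 < M s z) := by
    simp only [Finset.mem_filter, Finset.mem_univ, true_and]
    exact hbeat i j hij s hs t ht
  have htn : t ∉ Finset.univ.filter (fun z => 0 < M t z) := by
    simp [hdiag]
  have hlt : (Finset.univ.filter (fun z => 0 < M t z)).card <
      (Finset.univ.filter (fun z => 0 < M s z)).card :=
    Finset.card_lt_card ⟨hsub, fun h => htn (h hts)⟩
  unfold winRate
  rw [Finset.sum_boole, Finset.sum_boole]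
  apply mul_lt_mul_of_pos_left _ (by positivity)
  exact_mod_cast hlt
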